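/- Let ψ : (ℝⁿ∖{0}) × (ℝᵐ∖{0}) → ℝ^{n×m}, ψ(u,v) = uvᵀ, with component functions ψ_{i,j}(u,v) = uᵢvⱼ. Then for all indices (i,j) and (k,l) and all (u,v) in the domain, the Lie bracket [∇ψ_{i,j}, ∇ψ_{k,l}](u,v) = ∂²ψ_{i,j}(u,v)·∇ψ_{k,l}(u,v) − ∂²ψ_{k,l}(u,v)·∇ψ_{i,j}(u,v) lies in span{∇ψ_{a,b}(u,v) : 1 ≤ a ≤ n, 1 ≤ b ≤ m}. -/

import Mathlib

/-- The component `ψ_{i,j}(u,v) = uᵢ vⱼ` of `ψ(u,v) = uvᵀ`, on `ℝ^{n+m}`. -/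
noncomputable def psi14 (n m : ℕ) (i : Fin n) (j : Fin m)
    (θ : EuclideanSpace ℝ (Fin n ⊕ Fin m)) : ℝ :=
  θ (Sum.inl i) * θ (Sum.inr j)

noncomputable def L14 (n m : ℕ) (i : Fin n) (j : Fin m) :
    EuclideanSpace ℝ (Fin n ⊕ Fin m) →L[ℝ] EuclideanSpace ℝ (Fin n ⊕ Fin m) :=
  (EuclideanSpace.proj (Sum.inr j)).smulRight (EuclideanSpace.single (Sum.inl i) 1)
    + (EuclideanSpace.proj (Sum.inl i)).smulRight (EuclideanSpace.single (Sum.inr j) 1)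

lemma L14_apply (n m : ℕ) (i : Fin n) (j : Fin m) (w : EuclideanSpace ℝ (Fin n ⊕ Fin m)) :
    L14 n m i j w = w (Sum.inr j) • EuclideanSpace.single (Sum.inl i) (1:ℝ)
      + w (Sum.inl i) • EuclideanSpace.single (Sum.inr j) (1:ℝ) := by
  simp [L14, PiLp.proj_apply]

lemma hasGrad14 (n m : ℕ) (i : Fin n) (j : Fin m) (θ : EuclideanSpace ℝ (Fin n ⊕ Fin m)) :
    HasGradientAt (psi14 n m i j) (L14 n m i j θ) θ := by
  rw [hasGradientAt_iff_hasFDerivAt]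
  have h1 := (EuclideanSpace.proj (𝕜 := ℝ) (Sum.inl (α := Fin n) (β := Fin m) i)).hasFDerivAt (x := θ)
  have h2 := (EuclideanSpace.proj (𝕜 := ℝ) (Sum.inr (α := Fin n) (β := Fin m) j)).hasFDerivAt (x := θ)
  have h := h1.mul h2
  have heq : (fun x => EuclideanSpace.proj (𝕜 := ℝ) (Sum.inl (α := Fin n) (β := Fin m) i) x
      * EuclideanSpace.proj (Sum.inr j) x) = psi14 n m i j := rfl
  replace h : HasFDerivAt (psi14 n m i j) _ θ := h
  refine h.congr_fderiv ?_
  ext w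
  rw [L14_apply]
  simp [inner_add_left, real_inner_smul_left, EuclideanSpace.inner_single_left,
    PiLp.proj_apply]
  ring

lemma grad14_eq (n m : ℕ) (i : Fin n) (j : Fin m) (θ : EuclideanSpace ℝ (Fin n ⊕ Fin m)) :
    gradient (psi14 n m i j) θ = L14 n m i j θ :=
  (hasGrad14 n m i j θ).gradient

/-- on the domain `u ≠ 0, v ≠ 0`, the Lie bracket of any two gradient fields
`∇ψ_{i,j}, ∇ψ_{k,l}` lies in the span of all the gradients `∇ψ_{a,b}` (involutivity). -/
theorem stmt14 (n m : ℕ) (θ : EuclideanSpace ℝ (Fin n ⊕ Fin m))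
    (hu : ∃ i, θ (Sum.inl i) ≠ 0) (hv : ∃ j, θ (Sum.inr j) ≠ 0)
    (i k : Fin n) (j l : Fin m) :
    fderiv ℝ (fun w => gradient (psi14 n m i j) w) θ (gradient (psi14 n m k l) θ)
      - fderiv ℝ (fun w => gradient (psi14 n m k l) w) θ (gradient (psi14 n m i j) θ)
    ∈ Submodule.span ℝ
        (Set.range fun p : Fin n × Fin m => gradient (psi14 n m p.1 p.2) θ) := by
  obtain ⟨a, ha⟩ := hu
  obtain ⟨b, hb⟩ := hv
  have hf : ∀ (i : Fin n) (j : Fin m),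
      fderiv ℝ (fun w => gradient (psi14 n m i j) w) θ = L14 n m i j := by
    intro i j
    have : (fun w => gradient (psi14 n m i j) w) = fun w => L14 n m i j w := by
      funext w; exact grad14_eq n m i j w
    rw [this]
    exact (L14 n m i j).fderiv
  rw [hf, hf, grad14_eq, grad14_eq]
  simp only [grad14_eq]
  set S := Submodule.span ℝ
    (Set.range fun p : Fin n × Fin m => L14 n m p.1 p.2 θ) with hS
  have hmem : ∀ (p : Fin n) (q : Fin m), L14 n m p q θ ∈ S :=
    fun p q => Submodule.subset_span ⟨(p, q), rfl⟩
  have hA : θ (Sum.inl k) • L14 n m i b θ - θ (Sum.inl i) • L14 n m k b θ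
      = θ (Sum.inr b) • (θ (Sum.inl k) • EuclideanSpace.single (Sum.inl i) (1:ℝ)
          - θ (Sum.inl i) • EuclideanSpace.single (Sum.inl k) (1:ℝ)) := by
    rw [L14_apply, L14_apply]; module
  have hB : θ (Sum.inr l) • L14 n m a j θ - θ (Sum.inr j) • L14 n m a l θ
      = θ (Sum.inl a) • (θ (Sum.inr l) • EuclideanSpace.single (Sum.inr j) (1:ℝ)
          - θ (Sum.inr j) • EuclideanSpace.single (Sum.inr l) (1:ℝ)) := by
    rw [L14_apply, L14_apply]; module
  have hAmem : (θ (Sum.inl k) • EuclideanSpace.single (Sum.inl i) (1:ℝ)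
      - θ (Sum.inl i) • EuclideanSpace.single (Sum.inl k) (1:ℝ)) ∈ S := by
    have h1 := S.sub_mem (S.smul_mem (θ (Sum.inl k)) (hmem i b))
      (S.smul_mem (θ (Sum.inl i)) (hmem k b))
    rw [hA] at h1
    have h2 := S.smul_mem (θ (Sum.inr b))⁻¹ h1
    rwa [smul_smul, inv_mul_cancel₀ hb, one_smul] at h2
  have hBmem : (θ (Sum.inr l) • EuclideanSpace.single (Sum.inr j) (1:ℝ)
      - θ (Sum.inr j) • EuclideanSpace.single (Sum.inr l) (1:ℝ)) ∈ S := by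
    have h1 := S.sub_mem (S.smul_mem (θ (Sum.inr l)) (hmem a j))
      (S.smul_mem (θ (Sum.inr j)) (hmem a l))
    rw [hB] at h1
    have h2 := S.smul_mem (θ (Sum.inl a))⁻¹ h1
    rwa [smul_smul, inv_mul_cancel₀ ha, one_smul] at h2
  have coord1 : ∀ (p k : Fin n) (q l : Fin m),
      (L14 n m k l θ) (Sum.inr q) = (if q = l then θ (Sum.inl k) else 0) := by
    intro p k q l
    simp [L14_apply, EuclideanSpace.single_apply, PiLp.add_apply, PiLp.smul_apply]
  have coord2 : ∀ (p k : Fin n) (q l : Fin m),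
      (L14 n m k l θ) (Sum.inl p) = (if p = k then θ (Sum.inr l) else 0) := by
    intro p k q l
    simp [L14_apply, EuclideanSpace.single_apply, PiLp.add_apply, PiLp.smul_apply]
  have comp : ∀ (p k : Fin n) (q l : Fin m),
      L14 n m p q (L14 n m k l θ)
        = (if q = l then θ (Sum.inl k) else 0) • EuclideanSpace.single (Sum.inl p) (1:ℝ)
          + (if p = k then θ (Sum.inr l) else 0) • EuclideanSpace.single (Sum.inr q) (1:ℝ) := by
    intro p k q l
    rw [L14_apply, coord1 p k q l, coord2 p k q l]
  have key : L14 n m i j (L14 n m k l θ) - L14 n m k l (L14 n m i j θ)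
      = (if j = l then (1:ℝ) else 0) • (θ (Sum.inl k) • EuclideanSpace.single (Sum.inl i) (1:ℝ)
          - θ (Sum.inl i) • EuclideanSpace.single (Sum.inl k) (1:ℝ))
        + (if i = k then (1:ℝ) else 0) • (θ (Sum.inr l) • EuclideanSpace.single (Sum.inr j) (1:ℝ)
          - θ (Sum.inr j) • EuclideanSpace.single (Sum.inr l) (1:ℝ)) := by
    rw [comp i k j l, comp k i l j]
    rcases eq_or_ne j l with rfl | h <;> rcases eq_or_ne i k with rfl | h'
    · simp
    · simp only [if_pos rfl, if_neg h', if_neg (Ne.symm h'), if_true]; module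
    · simp only [if_pos rfl, if_neg h, if_neg (Ne.symm h), if_true]; module
    · simp only [if_neg h, if_neg (Ne.symm h), if_neg h', if_neg (Ne.symm h')]; module
  rw [key]
  exact S.add_mem (S.smul_mem _ hAmem) (S.smul_mem _ hBmem)
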